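/- arXiv:1202.1022 — 3 statements merged into one kernel-verified Lean document; each statement's English description precedes it below -/
import Mathlib

section
/- For every real number t with 0 < t ≤ π, one has 3·sin t/(1 − cos t) + 2·(3π)^(2/3)·(1 − cos t)^(1/3) ≥ 2·2^(1/3)·(3π)^(2/3). -/
open Real

set_option maxHeartbeats 1000000 in
theorem stmt3 (t : ℝ) (ht0 : 0 < t) (htpi : t ≤ π) :
    3 * Real.sin t / (1 - Real.cos t)
      + 2 * (3 * π) ^ ((2 : ℝ) / 3) * (1 - Real.cos t) ^ ((1 : ℝ) / 3)
    ≥ 2 * (2 : ℝ) ^ ((1 : ℝ) / 3) * (3 * π) ^ ((2 : ℝ) / 3) := by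
  have hπ := Real.pi_pos
  set s := Real.sin (t/2) with hs_def
  set c := Real.cos (t/2) with hc_def
  have hs : 0 < s := Real.sin_pos_of_pos_of_lt_pi (by linarith) (by linarith)
  have hc : 0 ≤ c := Real.cos_nonneg_of_mem_Icc ⟨by linarith, by linarith⟩
  have hsc : s^2 + c^2 = 1 := by rw [hs_def, hc_def]; exact Real.sin_sq_add_cos_sq _
  have hsin : Real.sin t = 2 * s * c := by
    have : t = 2 * (t/2) := by ring
    rw [this, Real.sin_two_mul]
  have hcos : 1 - Real.cos t = 2 * s^2 := by
    have h2 : t = 2 * (t/2) := by ring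
    rw [h2, Real.cos_two_mul]
    nlinarith [hsc]
  set u : ℝ := s ^ ((2:ℝ)/3) with hu_def
  have hu_pos : 0 < u := Real.rpow_pos_of_pos hs _
  have hs1 : s ≤ 1 := Real.sin_le_one _
  have hu1 : u ≤ 1 := Real.rpow_le_one hs.le hs1 (by norm_num)
  have hu3 : u^3 = s^2 := by
    rw [hu_def, ← Real.rpow_natCast (s ^ ((2:ℝ)/3)) 3, ← Real.rpow_mul hs.le,
      ← Real.rpow_natCast s 2]
    norm_num
  clear_value s c
  set K : ℝ := 2 * (2:ℝ) ^ ((1:ℝ)/3) * (3*π) ^ ((2:ℝ)/3) with hK_def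
  have h2c : ((2:ℝ)^((1:ℝ)/3))^3 = 2 := by
    rw [← Real.rpow_natCast ((2:ℝ)^((1:ℝ)/3)) 3, ← Real.rpow_mul (by norm_num : (0:ℝ) ≤ 2)]
    norm_num
  have h3c : ((3*π:ℝ)^((2:ℝ)/3))^3 = (3*π)^2 := by
    rw [← Real.rpow_natCast ((3*π:ℝ)^((2:ℝ)/3)) 3,
      ← Real.rpow_mul (by positivity : (0:ℝ) ≤ 3*π), ← Real.rpow_natCast (3*π) 2]
    norm_num
  have hK_pos : 0 < K := by
    rw [hK_def]; positivity
  have hK3 : K^3 = 144 * π^2 := by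
    rw [hK_def]
    have : (2 * (2:ℝ)^((1:ℝ)/3) * (3*π)^((2:ℝ)/3))^3
        = 8 * ((2:ℝ)^((1:ℝ)/3))^3 * ((3*π:ℝ)^((2:ℝ)/3))^3 := by ring
    rw [this, h2c, h3c]; ring
  clear_value u K
  have hK2 : K^2 ≤ 127 := by
    have hπ15 : π < 3.15 := by
      have := Real.pi_lt_d6; linarith
    have hp2 : π^2 < 9.9225 := by nlinarith [Real.pi_gt_three]
    have h6 : (K^2)^3 = (144*π^2)^2 := by rw [← hK3]; ring
    have hcube : (K^2)^3 < 127^3 := by rw [h6]; nlinarith [hp2, sq_nonneg π]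
    have := lt_of_pow_lt_pow_left₀ 3 (by norm_num : (0:ℝ) ≤ 127) hcube
    linarith
  -- polynomial inequality
  have poly : 127 * u^3 * (1-u)^2 ≤ 9 * (1 - u^3) := by
    nlinarith [sq_nonneg (u - 3/4), sq_nonneg (u - 1), mul_nonneg hu_pos.le hu_pos.le,
      mul_nonneg (mul_nonneg hu_pos.le hu_pos.le) hu_pos.le, sq_nonneg u,
      mul_nonneg (mul_nonneg hu_pos.le hu_pos.le) (sq_nonneg (u - 3/4)),
      mul_nonneg hu_pos.le (sq_nonneg (u-1)), sq_nonneg (u^2 - u)]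
  -- squared key inequality
  have hsq : (K * s * (1-u))^2 ≤ (3*c)^2 := by
    have h1 : (K * s * (1-u))^2 = K^2 * (s^2 * (1-u)^2) := by ring
    have h2 : s^2 * (1-u)^2 = u^3 * (1-u)^2 := by rw [hu3]
    have h3 : (3*c)^2 = 9 * (1 - u^3) := by rw [hu3]; linear_combination 9 * hsc
    rw [h1, h2, h3]
    have hnn : (0:ℝ) ≤ u^3 * (1-u)^2 := by positivity
    linarith [mul_le_mul_of_nonneg_right hK2 hnn, poly]
  have hkey : K * s * (1-u) ≤ 3 * c := by
    have hL : 0 ≤ K * s * (1-u) := by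
      apply mul_nonneg (mul_nonneg hK_pos.le hs.le); linarith
    nlinarith [hsq, hL, hc]
  have hdiv : K * (1-u) ≤ 3 * c / s := by
    rw [le_div_iff₀ hs]
    nlinarith [hkey]
  -- rewrite goal
  have e1 : 3 * Real.sin t / (1 - Real.cos t) = 3 * c / s := by
    rw [hsin, hcos]
    field_simp
  have e2 : (1 - Real.cos t) ^ ((1:ℝ)/3) = (2:ℝ)^((1:ℝ)/3) * u := by
    rw [hcos, Real.mul_rpow (by norm_num) (sq_nonneg s), hu_def,
      ← Real.rpow_natCast s 2, ← Real.rpow_mul hs.le]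
    norm_num
  rw [ge_iff_le, e1, e2]
  have e3 : 2 * (3*π) ^ ((2:ℝ)/3) * ((2:ℝ)^((1:ℝ)/3) * u) = K * u := by
    rw [hK_def]; ring
  rw [e3]
  nlinarith [hdiv, hu_pos, hu1, hK_pos]
end

section
/- The infimum over t ∈ (0, π] of the function t ↦ 3·sin t/(1 − cos t) + 2·(3π)^(2/3)·(1 − cos t)^(1/3) equals 2·2^(1/3)·(3π)^(2/3), and this infimum is attained at t = π. -/
open Real

private lemma quarticAux (a x : ℝ) (ha : 0 ≤ x) (hxa : x ≤ a) :
    127*(a-x)*x^3 ≤ 9*a^2*(a^2+a*x+x^2) := by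
  nlinarith [sq_nonneg (a-x), sq_nonneg (2*x-a), sq_nonneg (x*(2*x-a)),
    sq_nonneg (a*(2*x-a)), sq_nonneg (x^2 - a*x), sq_nonneg a, sq_nonneg x,
    mul_nonneg ha (sub_nonneg.2 hxa)]

private lemma piAux : 20736 * π^4 ≤ 127^3 := by
  have h := Real.pi_lt_d6
  have h0 := Real.pi_pos
  have h2 : π^2 < 9.8697 := by nlinarith
  have h4 : π^4 < 97.42 := by nlinarith [sq_nonneg π]
  nlinarith

private lemma cubeAux {u : ℝ} (hu : 0 ≤ u) : (u ^ ((1:ℝ)/3))^3 = u := by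
  rw [← Real.rpow_natCast (u ^ ((1:ℝ)/3)) 3, ← Real.rpow_mul hu]
  norm_num

private lemma keyBound {t : ℝ} (ht : t ∈ Set.Ioc 0 π) :
    2 * (2 : ℝ) ^ ((1 : ℝ) / 3) * (3 * π) ^ ((2 : ℝ) / 3) ≤
      3 * Real.sin t / (1 - Real.cos t)
        + 2 * (3 * π) ^ ((2 : ℝ) / 3) * (1 - Real.cos t) ^ ((1 : ℝ) / 3) := by
  obtain ⟨ht0, htπ⟩ := ht
  set s := Real.sin t with hs_def
  set u := 1 - Real.cos t with hu_def
  have hcos : Real.cos t < 1 := by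
    have := Real.cos_lt_cos_of_nonneg_of_le_pi le_rfl htπ ht0
    simpa using this
  have hu : 0 < u := by simp [hu_def]; linarith
  have hu2 : u ≤ 2 := by
    have := Real.neg_one_le_cos t
    simp [hu_def]; linarith
  have hs : 0 ≤ s := Real.sin_nonneg_of_nonneg_of_le_pi ht0.le htπ
  have hs2 : s ^ 2 = u * (2 - u) := by
    have := Real.sin_sq_add_cos_sq t
    simp [hu_def, hs_def]; nlinarith [this]
  set x := u ^ ((1:ℝ)/3) with hx_def
  set a := (2:ℝ) ^ ((1:ℝ)/3) with ha_def
  set C := (3 * π) ^ ((2:ℝ)/3) with hC_def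
  have hx : 0 < x := Real.rpow_pos_of_pos hu _
  have ha : 0 < a := Real.rpow_pos_of_pos two_pos _
  have hπ : (0:ℝ) < 3 * π := by positivity
  have hC : 0 < C := Real.rpow_pos_of_pos hπ _
  have hx3 : x ^ 3 = u := cubeAux hu.le
  have ha3 : a ^ 3 = 2 := cubeAux (by norm_num)
  have hC3 : C ^ 3 = (3 * π) ^ 2 := by
    rw [hC_def, ← Real.rpow_natCast ((3*π) ^ ((2:ℝ)/3)) 3, ← Real.rpow_mul hπ.le,
      ← Real.rpow_natCast (3*π) 2]
    norm_num
  have hxa : x ≤ a := by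
    refine le_of_pow_le_pow_left₀ three_ne_zero ha.le ?_
    rw [hx3, ha3]; exact hu2
  -- 4 C² a² ≤ 127
  have hQ : 4 * C^2 * a^2 ≤ 127 := by
    refine le_of_pow_le_pow_left₀ three_ne_zero (by norm_num) ?_
    have : (4 * C^2 * a^2)^3 = 64 * (C^3)^2 * (a^3)^2 := by ring
    rw [this, hC3, ha3]
    have := piAux
    nlinarith [this]
  have haxnn : 0 ≤ a - x := by linarith
  -- key chain
  have hpoly := quarticAux a x hx.le hxa
  have h1 : 4 * C^2 * a^2 * ((a-x)*x^3) ≤ 127 * ((a-x)*x^3) := by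
    have hnn : 0 ≤ (a-x)*x^3 := by positivity
    exact mul_le_mul_of_nonneg_right hQ hnn
  have h3 : 4 * C^2 * ((a-x)*x^3) ≤ 9*(a^2+a*x+x^2) := by
    have ha2 : (0:ℝ) < a^2 := by positivity
    rw [← mul_le_mul_iff_of_pos_right ha2]
    calc 4*C^2*((a-x)*x^3)*a^2 = 4*C^2*a^2*((a-x)*x^3) := by ring
      _ ≤ 127*((a-x)*x^3) := h1
      _ = 127*(a-x)*x^3 := by ring
      _ ≤ 9*a^2*(a^2+a*x+x^2) := hpoly
      _ = 9*(a^2+a*x+x^2)*a^2 := by ring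
  have h4 : 4 * C^2 * (a-x)^2 * x^3 ≤ 9 * (2 - u) := by
    calc 4*C^2*(a-x)^2*x^3 = (a-x) * (4*C^2*((a-x)*x^3)) := by ring
      _ ≤ (a-x) * (9*(a^2+a*x+x^2)) := mul_le_mul_of_nonneg_left h3 haxnn
      _ = 9*(a^3-x^3) := by ring
      _ = 9*(2-u) := by rw [ha3, hx3]
  -- (2C(a-x)u)² ≤ (3s)²
  have hR : (2 * C * (a-x) * u)^2 ≤ (3*s)^2 := by
    have hu6 : u^2 = x^3 * x^3 := by rw [hx3]; ring
    have : (2 * C * (a-x) * u)^2 = (4 * C^2 * (a-x)^2 * x^3) * x^3 := by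
      rw [show (2 * C * (a-x) * u)^2 = 4 * C^2 * (a-x)^2 * u^2 by ring, hu6]; ring
    rw [this]
    calc (4 * C^2 * (a-x)^2 * x^3) * x^3 ≤ (9 * (2 - u)) * x^3 :=
          mul_le_mul_of_nonneg_right h4 (by positivity)
      _ = 9 * (u * (2-u)) := by rw [hx3]; ring
      _ = (3*s)^2 := by rw [← hs2]; ring
  have hRle : 2 * C * (a-x) * u ≤ 3 * s :=
    le_of_pow_le_pow_left₀ two_ne_zero (by linarith) hR
  -- finish
  have hdiv : 2 * C * (a-x) ≤ 3 * s / u := by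
    rw [le_div_iff₀ hu]
    linarith [hRle]
  calc 2 * a * C = 2 * C * (a-x) + 2 * C * x := by ring
    _ ≤ 3 * s / u + 2 * C * x := by linarith

theorem stmt4 :
    sInf ((fun t : ℝ =>
        3 * Real.sin t / (1 - Real.cos t)
          + 2 * (3 * π) ^ ((2 : ℝ) / 3) * (1 - Real.cos t) ^ ((1 : ℝ) / 3)) '' Set.Ioc 0 π)
      = 2 * (2 : ℝ) ^ ((1 : ℝ) / 3) * (3 * π) ^ ((2 : ℝ) / 3)
    ∧ 3 * Real.sin π / (1 - Real.cos π)
        + 2 * (3 * π) ^ ((2 : ℝ) / 3) * (1 - Real.cos π) ^ ((1 : ℝ) / 3)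
      = 2 * (2 : ℝ) ^ ((1 : ℝ) / 3) * (3 * π) ^ ((2 : ℝ) / 3) := by
  have hval : 3 * Real.sin π / (1 - Real.cos π)
        + 2 * (3 * π) ^ ((2 : ℝ) / 3) * (1 - Real.cos π) ^ ((1 : ℝ) / 3)
      = 2 * (2 : ℝ) ^ ((1 : ℝ) / 3) * (3 * π) ^ ((2 : ℝ) / 3) := by
    rw [Real.sin_pi, Real.cos_pi]
    norm_num
    ring
  refine ⟨?_, hval⟩
  apply IsLeast.csInf_eq
  constructor
  · exact ⟨π, ⟨Real.pi_pos, le_rfl⟩, hval⟩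
  · rintro y ⟨t, ht, rfl⟩
    exact keyBound ht
end

section
/- For every real number v ≥ 27 and every t with 0 < t < π, one has v·sin t/(1 − cos t) + 2·(3π)^(2/3)·v^(2/3)·(1 − cos t)^(1/3) ≥ 2^(4/3)·(3π)^(2/3)·v^(2/3). -/
set_option maxHeartbeats 800000


open Real

theorem stmt5 (v t : ℝ) (hv : 27 ≤ v) (ht0 : 0 < t) (htpi : t < π) :
    v * Real.sin t / (1 - Real.cos t)
      + 2 * (3 * π) ^ ((2 : ℝ) / 3) * v ^ ((2 : ℝ) / 3) * (1 - Real.cos t) ^ ((1 : ℝ) / 3)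
    ≥ (2 : ℝ) ^ ((4 : ℝ) / 3) * (3 * π) ^ ((2 : ℝ) / 3) * v ^ ((2 : ℝ) / 3) := by
  have hpi : 0 < π := Real.pi_pos
  have hcos1 : Real.cos t < 1 := by
    have := Real.cos_lt_cos_of_nonneg_of_le_pi le_rfl htpi.le ht0
    simpa using this
  have hcosneg : -1 < Real.cos t := by
    have := Real.cos_lt_cos_of_nonneg_of_le_pi ht0.le le_rfl htpi
    simpa using this
  set c : ℝ := 1 - Real.cos t with hc_def
  have hc0 : 0 < c := by simp [hc_def]; linarith
  have hc2 : c < 2 := by simp [hc_def]; linarith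
  have hs : 0 < Real.sin t := Real.sin_pos_of_pos_of_lt_pi ht0 htpi
  have hsq : Real.sin t ^ 2 = c * (2 - c) := by
    have := Real.sin_sq_add_cos_sq t
    simp only [hc_def]; nlinarith
  set a : ℝ := (2 : ℝ) ^ ((1 : ℝ) / 3) with ha_def
  set w : ℝ := c ^ ((1 : ℝ) / 3) with hw_def
  have ha0 : 0 < a := Real.rpow_pos_of_pos (by norm_num) _
  have hw0 : 0 < w := Real.rpow_pos_of_pos hc0 _
  have ha3 : a ^ 3 = 2 := by
    rw [ha_def, ← Real.rpow_natCast ((2:ℝ) ^ ((1:ℝ)/3)) 3, ← Real.rpow_mul (by norm_num)]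
    norm_num
  have hw3 : w ^ 3 = c := by
    rw [hw_def, ← Real.rpow_natCast (c ^ ((1:ℝ)/3)) 3, ← Real.rpow_mul hc0.le]
    norm_num
  have hwa : w < a := by
    rw [hw_def, ha_def]
    exact Real.rpow_lt_rpow hc0.le hc2 (by norm_num)
  have ha_lb : (5/4 : ℝ) ≤ a :=
    le_of_pow_le_pow_left₀ (n := 3) (by norm_num) ha0.le (by rw [ha3]; norm_num)
  have ha_ub : a ≤ (13/10 : ℝ) :=
    le_of_pow_le_pow_left₀ (n := 3) (by norm_num) (by norm_num) (by rw [ha3]; norm_num)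
  -- v^{1/3} ≥ 3, v = v^{1/3} * v^{2/3}
  have hv0 : (0:ℝ) < v := by linarith
  set U : ℝ := v ^ ((1 : ℝ) / 3) with hU_def
  set V : ℝ := v ^ ((2 : ℝ) / 3) with hV_def
  have hU3 : (3:ℝ) ≤ U := by
    have h27 : (27:ℝ) ^ ((1:ℝ)/3) = 3 := by
      rw [show (27:ℝ) = 3 ^ (3:ℕ) by norm_num, ← Real.rpow_natCast (3:ℝ) 3,
        ← Real.rpow_mul (by norm_num)]
      norm_num
    have h := Real.rpow_le_rpow (show (0:ℝ) ≤ 27 by norm_num) hv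
      (show (0:ℝ) ≤ 1/3 by norm_num)
    rw [h27] at h
    exact h
  have hV0 : 0 < V := Real.rpow_pos_of_pos hv0 _
  have hUV : U * V = v := by
    rw [hU_def, hV_def, ← Real.rpow_add hv0]
    norm_num
  -- bound on π-constant
  set P : ℝ := (3 * π) ^ ((2 : ℝ) / 3) with hP_def
  have hP0 : 0 < P := Real.rpow_pos_of_pos (by linarith) _
  have hPsq : P ^ 2 = (3 * π) ^ ((4 : ℝ) / 3) := by
    rw [hP_def, ← Real.rpow_natCast ((3*π) ^ ((2:ℝ)/3)) 2, ← Real.rpow_mul (by positivity)]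
    norm_num
  have hP20 : P ^ 2 ≤ 20 := by
    rw [hPsq]
    have h1 : (3 * π) ^ ((4:ℝ)/3) ≤ (189/20 : ℝ) ^ ((4:ℝ)/3) := by
      have := Real.pi_lt_d2
      exact Real.rpow_le_rpow (by positivity) (by linarith) (by norm_num)
    have h2 : ((189/20 : ℝ) ^ ((4:ℝ)/3)) ≤ 20 := by
      have hx0 : (0:ℝ) ≤ (189/20 : ℝ) ^ ((4:ℝ)/3) := by positivity
      refine le_of_pow_le_pow_left₀ (n := 3) (by norm_num) (by norm_num) ?_
      rw [← Real.rpow_natCast ((189/20:ℝ) ^ ((4:ℝ)/3)) 3, ← Real.rpow_mul (by norm_num)]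
      rw [show (4:ℝ)/3 * (3:ℕ) = ((4:ℕ):ℝ) by push_cast; ring, Real.rpow_natCast]
      norm_num
    linarith
  -- key polynomial inequality
  have ha2lb : (25/16 : ℝ) ≤ a ^ 2 := by nlinarith [ha_lb, ha0]
  have ha2ub : a ^ 2 ≤ (169/100 : ℝ) := by nlinarith [ha_ub, ha0]
  have hpoly : 80 * w ^ 3 * (a - w) ≤ 9 * (a ^ 2 + a * w + w ^ 2) := by
    nlinarith [sq_nonneg (4 * w ^ 2 - 2 * a * w - 1), sq_nonneg (30 * w - 11 * a),
      sq_nonneg w, ha2lb, ha2ub, hw0.le, mul_nonneg hw0.le ha0.le]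
  -- key: 3 sin t ≥ 2 P c (a - w)
  have hfact : 2 - c = (a - w) * (a ^ 2 + a * w + w ^ 2) := by
    have : a ^ 3 - w ^ 3 = (a - w) * (a ^ 2 + a * w + w ^ 2) := by ring
    rw [← ha3, ← hw3]; linarith [this]
  have hkey : 2 * P * c * (a - w) ≤ 3 * Real.sin t := by
    have hRnn : 0 ≤ 2 * P * c * (a - w) := by
      have := sub_nonneg.2 hwa.le
      positivity
    have hsqcmp : (2 * P * c * (a - w)) ^ 2 ≤ (3 * Real.sin t) ^ 2 := by
      have e1 : (3 * Real.sin t) ^ 2 = 9 * (c * ((a - w) * (a ^ 2 + a * w + w ^ 2))) := by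
        rw [← hfact]; nlinarith [hsq]
      have e2 : (2 * P * c * (a - w)) ^ 2 = 4 * P ^ 2 * (c * (a - w)) * (c * (a - w)) := by
        ring
      have hcaw : 0 ≤ c * (a - w) := mul_nonneg hc0.le (sub_nonneg.2 hwa.le)
      have h80 : 4 * P ^ 2 ≤ 80 := by linarith
      have hmul : 4 * P ^ 2 * (c * (a - w)) * (c * (a - w)) ≤
          80 * (c * (a - w)) * (c * (a - w)) := by
        have := mul_le_mul_of_nonneg_right (mul_le_mul_of_nonneg_right h80 hcaw) hcaw
        linarith
      have hmain : 80 * (c * (a - w)) * (c * (a - w)) ≤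
          9 * (c * ((a - w) * (a ^ 2 + a * w + w ^ 2))) := by
        have := mul_le_mul_of_nonneg_left hpoly hcaw
        calc 80 * (c * (a - w)) * (c * (a - w)) = (c * (a - w)) * (80 * w ^ 3 * (a - w)) := by
              rw [← hw3]; ring
          _ ≤ (c * (a - w)) * (9 * (a ^ 2 + a * w + w ^ 2)) := this
          _ = 9 * (c * ((a - w) * (a ^ 2 + a * w + w ^ 2))) := by ring
      rw [e1, e2]; linarith
    nlinarith [hs, hRnn, hsqcmp]
  -- main estimate
  have hstep : 2 * P * V * (a - w) ≤ v * Real.sin t / c := by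
    rw [le_div_iff₀ hc0]
    have h1 : V * (2 * P * c * (a - w)) ≤ V * (3 * Real.sin t) :=
      mul_le_mul_of_nonneg_left hkey hV0.le
    have h2 : 3 * V * Real.sin t ≤ U * V * Real.sin t := by
      have : 0 ≤ (U - 3) * V * Real.sin t := by
        apply mul_nonneg (mul_nonneg (by linarith) hV0.le) hs.le
      linarith [this]
    calc 2 * P * V * (a - w) * c = V * (2 * P * c * (a - w)) := by ring
      _ ≤ V * (3 * Real.sin t) := h1
      _ = 3 * V * Real.sin t := by ring
      _ ≤ U * V * Real.sin t := h2
      _ = v * Real.sin t := by rw [hUV]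
  have h24 : (2:ℝ) ^ ((4:ℝ)/3) = 2 * a := by
    rw [ha_def, show (4:ℝ)/3 = 1 + 1/3 by norm_num, Real.rpow_add (by norm_num),
      Real.rpow_one]
  rw [ge_iff_le, h24]
  have : 2 * a * P * V = 2 * P * V * (a - w) + 2 * P * V * w := by ring
  rw [this]
  have hsecond : 2 * P * V * w = 2 * P * V * c ^ ((1:ℝ)/3) := by rw [← hw_def]
  linarith [hstep]
end
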